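/- Let Ω ⊆ ℝⁿ be open and star-shaped with respect to 0 ∈ Ω. Define ∂₂Ω := {x ∈ ∂Ω : ∃ε > 0, tx ∈ ∂Ω for all t ∈ (1-ε, 1+ε)} and ∂₁Ω := ∂Ω \ ∂₂Ω. If there exists a convex function u : Ω → ℝ such that for every x ∈ ∂₁Ω and every δ > 0 the essential supremum of |∇u| over B_δ(x) ∩ Ω is infinite, then Ω is convex. -/

import Mathlib

open Metric Set

/-- Subgradient inequality: for the pointwise convexity condition, the inequality
holds for *every* pair of points of `Ω`, since only the combination point near `y`
needs to be in `Ω`. -/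
lemma subgrad_aux {n : ℕ} {Ω : Set (EuclideanSpace ℝ (Fin n))}
    (hΩopen : IsOpen Ω)
    {u : EuclideanSpace ℝ (Fin n) → ℝ}
    (hconv : ∀ x ∈ Ω, ∀ y ∈ Ω, ∀ τ : ℝ, τ ∈ Ioo (0:ℝ) 1 →
      τ • x + (1 - τ) • y ∈ Ω →
      u (τ • x + (1 - τ) • y) ≤ τ * u x + (1 - τ) * u y)
    {y z : EuclideanSpace ℝ (Fin n)} (hy : y ∈ Ω) (hz : z ∈ Ω)
    (hd : DifferentiableAt ℝ u y) :
    fderiv ℝ u y (z - y) ≤ u z - u y := by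
  have hψ : ∀ s : ℝ, y + s • (z - y) = s • z + (1 - s) • y := by
    intro s; module
  have hder : HasDerivAt (fun s : ℝ => u (y + s • (z - y))) (fderiv ℝ u y (z - y)) 0 := by
    have h1 : HasDerivAt (fun s : ℝ => y + s • (z - y)) (z - y) 0 := by
      simpa using ((hasDerivAt_id (0 : ℝ)).smul_const (z - y)).const_add y
    have h2 : HasFDerivAt u (fderiv ℝ u y) (y + (0 : ℝ) • (z - y)) := by
      simpa using hd.hasFDerivAt
    exact h2.comp_hasDerivAt 0 h1
  have htend : Filter.Tendsto (slope (fun s : ℝ => u (y + s • (z - y))) 0)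
      (nhdsWithin 0 (Ioi 0)) (nhds (fderiv ℝ u y (z - y))) :=
    (hasDerivAt_iff_tendsto_slope.1 hder).mono_left
      (nhdsWithin_mono 0 (fun s hs => by
        simpa [Set.mem_compl_singleton_iff] using (ne_of_gt hs)))
  refine le_of_tendsto htend ?_
  have hmem : ∀ᶠ s : ℝ in nhdsWithin 0 (Ioi 0), y + s • (z - y) ∈ Ω := by
    have hc : Continuous (fun s : ℝ => y + s • (z - y)) :=
      continuous_const.add (continuous_id.smul continuous_const)
    have hpre : (fun s : ℝ => y + s • (z - y)) ⁻¹' Ω ∈ nhds (0:ℝ) := by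
      apply hc.continuousAt.preimage_mem_nhds
      simpa using hΩopen.mem_nhds hy
    exact Filter.Eventually.filter_mono nhdsWithin_le_nhds hpre
  have hlt : ∀ᶠ s : ℝ in nhdsWithin 0 (Ioi 0), s ∈ Ioo (0:ℝ) 1 :=
    Ioo_mem_nhdsGT_of_mem ⟨le_rfl, one_pos⟩
  filter_upwards [hmem, hlt] with s hsΩ hs01
  have h3 := hconv z hz y hy s hs01 (by rw [← hψ]; exact hsΩ)
  rw [← hψ] at h3
  have hfz : (fun s : ℝ => u (y + s • (z - y))) 0 = u y := by simp
  rw [slope_def_field]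
  simp only [hfz, sub_zero]
  rw [div_le_iff₀ hs01.1]
  nlinarith [h3]

/-- Operator norm of a functional on Euclidean space is controlled by its values on the
standard basis vectors. -/
lemma opnorm_aux {n : ℕ} (hn : 0 < n) (G : EuclideanSpace ℝ (Fin n) →L[ℝ] ℝ) {B : ℝ}
    (hB : ∀ i : Fin n, |G (EuclideanSpace.single i 1)| ≤ B) :
    ‖G‖ ≤ Real.sqrt n * B := by
  have hB0 : 0 ≤ B := le_trans (abs_nonneg _) (hB ⟨0, hn⟩)
  refine G.opNorm_le_bound (by positivity) fun v => ?_
  have hrepr : v = ∑ i, v i • EuclideanSpace.single i (1:ℝ) := by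
    have := (EuclideanSpace.basisFun (Fin n) ℝ).sum_repr v
    simp only [EuclideanSpace.basisFun_repr, EuclideanSpace.basisFun_apply] at this
    exact this.symm
  have hGv : G v = ∑ i, v i * G (EuclideanSpace.single i 1) := by
    conv_lhs => rw [hrepr]
    rw [map_sum]
    simp [smul_eq_mul]
  have h1 : |G v| ≤ (∑ i, |v i|) * B := by
    rw [hGv, Finset.sum_mul]
    refine (Finset.abs_sum_le_sum_abs _ _).trans ?_
    refine Finset.sum_le_sum fun i _ => ?_
    rw [abs_mul]
    exact mul_le_mul_of_nonneg_left (hB i) (abs_nonneg _)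
  have hnn : 0 ≤ ∑ i, |v i| := Finset.sum_nonneg fun i _ => abs_nonneg _
  have hsq : (∑ i, |v i|) ^ 2 ≤ (n : ℝ) * ∑ i, (v i) ^ 2 := by
    have := sq_sum_le_card_mul_sum_sq (s := (Finset.univ : Finset (Fin n)))
      (f := fun i => |v i|)
    simpa [sq_abs, Finset.card_univ] using this
  have hvn : ‖v‖ = Real.sqrt (∑ i, (v i) ^ 2) := by
    rw [EuclideanSpace.norm_eq]
    congr 1
    refine Finset.sum_congr rfl fun i _ => ?_
    simp [Real.norm_eq_abs, sq_abs]
  have h2 : (∑ i, |v i|) ≤ Real.sqrt n * ‖v‖ := by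
    have h3 : (∑ i, |v i|) = Real.sqrt ((∑ i, |v i|) ^ 2) := (Real.sqrt_sq hnn).symm
    rw [h3, hvn]
    calc Real.sqrt ((∑ i, |v i|) ^ 2) ≤ Real.sqrt ((n : ℝ) * ∑ i, (v i) ^ 2) :=
          Real.sqrt_le_sqrt hsq
      _ = Real.sqrt n * Real.sqrt (∑ i, (v i) ^ 2) := Real.sqrt_mul (by positivity) _
  calc ‖G v‖ = |G v| := rfl
    _ ≤ (∑ i, |v i|) * B := h1
    _ ≤ (Real.sqrt n * ‖v‖) * B := mul_le_mul_of_nonneg_right h2 hB0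
    _ = Real.sqrt n * B * ‖v‖ := by ring

set_option maxHeartbeats 2000000 in
/-- A star-shaped open set admitting a convex function whose gradient blows up
near every point of `∂₁Ω` is convex. -/
theorem stmt_1 {n : ℕ} (Ω : Set (EuclideanSpace ℝ (Fin n)))
    (hΩopen : IsOpen Ω) (h0 : (0 : EuclideanSpace ℝ (Fin n)) ∈ Ω)
    (hstar : ∀ x ∈ Ω, ∀ t : ℝ, t ∈ Icc (0:ℝ) 1 → t • x ∈ Ω)
    (u : EuclideanSpace ℝ (Fin n) → ℝ)
    (hconv : ∀ x ∈ Ω, ∀ y ∈ Ω, ∀ τ : ℝ, τ ∈ Ioo (0:ℝ) 1 →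
      τ • x + (1 - τ) • y ∈ Ω →
      u (τ • x + (1 - τ) • y) ≤ τ * u x + (1 - τ) * u y)
    (hblow : ∀ x ∈ frontier Ω \
        {x ∈ frontier Ω | ∃ ε > (0:ℝ), ∀ t ∈ Ioo (1 - ε) (1 + ε), t • x ∈ frontier Ω},
      ∀ δ > (0:ℝ), ∀ C : ℝ,
      ∃ y ∈ ball x δ ∩ Ω, DifferentiableAt ℝ u y ∧ C < ‖fderiv ℝ u y‖) :
    Convex ℝ Ω := by
  classical
  rcases Nat.eq_zero_or_pos n with hn | hn
  · subst hn
    intro p hp q hq a b ha hb hab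
    have hsub : Subsingleton (EuclideanSpace ℝ (Fin 0)) :=
      ⟨fun f g => by ext i; exact i.elim0⟩
    have : a • p + b • q = p := hsub.elim _ _
    rwa [this]
  intro y₁ hy₁ y₂ hy₂ a b ha hb hab
  by_contra hm
  set m : EuclideanSpace ℝ (Fin n) := a • y₁ + b • y₂ with hmdef
  -- strict combination
  have ha0 : 0 < a := by
    rcases eq_or_lt_of_le ha with h | h
    · exfalso
      apply hm
      rw [hmdef, ← h, zero_smul, zero_add, show b = 1 by linarith, one_smul]
      exact hy₂
    · exact h
  have hb0 : 0 < b := by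
    rcases eq_or_lt_of_le hb with h | h
    · exfalso
      apply hm
      rw [hmdef, ← h, zero_smul, add_zero, show a = 1 by linarith, one_smul]
      exact hy₁
    · exact h
  -- the first exit point along the ray through m
  set S : Set ℝ := {t | t ∈ Icc (0:ℝ) 1 ∧ t • m ∈ Ω} with hSdef
  have hS0 : (0:ℝ) ∈ S := ⟨⟨le_rfl, zero_le_one⟩, by simpa using h0⟩
  have hSbdd : BddAbove S := ⟨1, fun t ht => ht.1.2⟩
  set t₁ : ℝ := sSup S with ht₁def
  have ht₁le : t₁ ≤ 1 := csSup_le ⟨0, hS0⟩ fun t ht => ht.1.2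
  have ht₁0 : 0 ≤ t₁ := le_csSup hSbdd hS0
  have ht₁pos : 0 < t₁ := by
    have hc : ContinuousAt (fun t : ℝ => t • m) 0 :=
      (continuous_id.smul continuous_const).continuousAt
    have hmem : (fun t : ℝ => t • m) ⁻¹' Ω ∈ nhds (0:ℝ) :=
      hc.preimage_mem_nhds (hΩopen.mem_nhds (by simpa using h0))
    obtain ⟨ε, hε, hball⟩ := Metric.mem_nhds_iff.1 hmem
    have htS : min (ε/2) 1 ∈ S := by
      constructor
      · exact ⟨le_min (by positivity) zero_le_one, min_le_right _ _⟩
      · apply hball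
        rw [mem_ball, Real.dist_eq, sub_zero, abs_of_pos (lt_min (by positivity) one_pos)]
        calc min (ε/2) 1 ≤ ε/2 := min_le_left _ _
          _ < ε := by linarith
    calc (0:ℝ) < min (ε/2) 1 := lt_min (by positivity) one_pos
      _ ≤ t₁ := le_csSup hSbdd htS
  have hray : ∀ t : ℝ, 0 ≤ t → t < t₁ → t • m ∈ Ω := by
    intro t ht0 htlt
    obtain ⟨s, hsS, hst⟩ := exists_lt_of_lt_csSup ⟨0, hS0⟩ htlt
    have hs0 : 0 < s := lt_of_le_of_lt ht0 hst
    have hts : (t / s) • (s • m) ∈ Ω :=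
      hstar _ hsS.2 _ ⟨div_nonneg ht0 hs0.le, (div_le_one hs0).2 hst.le⟩
    rwa [smul_smul, div_mul_cancel₀ _ hs0.ne'] at hts
  set x : EuclideanSpace ℝ (Fin n) := t₁ • m with hxdef
  have hxnot : x ∉ Ω := by
    intro hxin
    rcases eq_or_lt_of_le ht₁le with h1 | h1
    · rw [hxdef, h1, one_smul] at hxin
      exact hm hxin
    · have hc : ContinuousAt (fun t : ℝ => t • m) t₁ :=
        (continuous_id.smul continuous_const).continuousAt
      have hmem : (fun t : ℝ => t • m) ⁻¹' Ω ∈ nhds t₁ :=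
        hc.preimage_mem_nhds (hΩopen.mem_nhds hxin)
      obtain ⟨ε, hε, hball⟩ := Metric.mem_nhds_iff.1 hmem
      set t' : ℝ := min (t₁ + ε/2) 1 with ht'def
      have ht'gt : t₁ < t' := lt_min (by linarith) h1
      have ht'S : t' ∈ S := by
        constructor
        · exact ⟨le_trans ht₁0 ht'gt.le, min_le_right _ _⟩
        · apply hball
          rw [mem_ball, Real.dist_eq, abs_of_pos (by linarith)]
          calc t' - t₁ ≤ (t₁ + ε/2) - t₁ := by
                have := min_le_left (t₁ + ε/2) 1
                linarith
            _ < ε := by linarith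
      exact absurd (le_csSup hSbdd ht'S) (not_le.2 ht'gt)
  have hxcl : x ∈ closure Ω := by
    rw [_root_.mem_closure_iff]
    intro O hO hxO
    have hc : ContinuousAt (fun t : ℝ => t • m) t₁ :=
      (continuous_id.smul continuous_const).continuousAt
    have hmem : (fun t : ℝ => t • m) ⁻¹' O ∈ nhds t₁ :=
      hc.preimage_mem_nhds (hO.mem_nhds hxO)
    obtain ⟨ε, hε, hball⟩ := Metric.mem_nhds_iff.1 hmem
    set t : ℝ := t₁ - min t₁ ε / 2 with htdef
    have hminpos : 0 < min t₁ ε := lt_min ht₁pos hε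
    have ht0 : 0 ≤ t := by
      have := min_le_left t₁ ε
      simp only [htdef]
      linarith
    have htlt : t < t₁ := by simp only [htdef]; linarith
    refine ⟨t • m, ?_, hray t ht0 htlt⟩
    apply hball
    rw [mem_ball, Real.dist_eq]
    have := min_le_right t₁ ε
    rw [abs_of_nonpos (by simp only [htdef]; linarith)]
    simp only [htdef]
    linarith
  have hxfr : x ∈ frontier Ω := ⟨hxcl, by rwa [hΩopen.interior_eq]⟩
  -- x belongs to ∂₁Ω
  have hx1 : x ∈ frontier Ω \
      {x ∈ frontier Ω | ∃ ε > (0:ℝ), ∀ t ∈ Ioo (1 - ε) (1 + ε), t • x ∈ frontier Ω} := by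
    refine ⟨hxfr, ?_⟩
    rintro ⟨-, ε, hε, hall⟩
    set t : ℝ := 1 - min ε 1 / 2 with htdef
    have hminpos : 0 < min ε 1 := lt_min hε one_pos
    have hmin1 : min ε 1 ≤ 1 := min_le_right _ _
    have hminε : min ε 1 ≤ ε := min_le_left _ _
    have ht : t ∈ Ioo (1 - ε) (1 + ε) := by
      constructor
      · simp only [htdef]; linarith
      · simp only [htdef]; linarith
    have htlt1 : t < 1 := by simp only [htdef]; linarith
    have ht0 : 0 ≤ t := by simp only [htdef]; linarith
    have hin : t • x ∈ Ω := by
      rw [hxdef, smul_smul]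
      refine hray _ (mul_nonneg ht0 ht₁0) ?_
      nlinarith
    have hfr := hall t ht
    exact hfr.2 (by rwa [hΩopen.interior_eq])
  -- x is a strict convex combination of two points of Ω
  have ha' : t₁ • y₁ ∈ Ω := hstar _ hy₁ _ ⟨ht₁0, ht₁le⟩
  have hb' : t₁ • y₂ ∈ Ω := hstar _ hy₂ _ ⟨ht₁0, ht₁le⟩
  have hxab : x = a • (t₁ • y₁) + b • (t₁ • y₂) := by
    rw [hxdef, hmdef]; module
  -- x lies in the interior of the convex hull of Ω
  have hΩC : Ω ⊆ interior (convexHull ℝ Ω) :=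
    interior_maximal (subset_convexHull ℝ Ω) hΩopen
  have hxint : x ∈ interior (convexHull ℝ Ω) := by
    by_contra hxi
    obtain ⟨f, hf⟩ := geometric_hahn_banach_open_point
      (convex_convexHull ℝ Ω).interior isOpen_interior hxi
    have h1 : f (t₁ • y₁) < f x := hf _ (hΩC ha')
    have h2 : f (t₁ • y₂) < f x := hf _ (hΩC hb')
    have h3 : f x = a * f (t₁ • y₁) + b * f (t₁ • y₂) := by
      rw [hxab]; simp [map_add, map_smul]
    have h4 : a * f x + b * f x = f x := by rw [← add_mul, hab, one_mul]
    have h5 := mul_lt_mul_of_pos_left h1 ha0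
    have h6 := mul_lt_mul_of_pos_left h2 hb0
    linarith
  obtain ⟨η, hη, hballx⟩ := Metric.isOpen_iff.1 isOpen_interior x hxint
  -- a small ball at the origin, and continuity of u there
  obtain ⟨ρ₀, hρ₀, hball0⟩ := Metric.isOpen_iff.1 hΩopen 0 h0
  have hco : ConvexOn ℝ (ball (0 : EuclideanSpace ℝ (Fin n)) ρ₀) u := by
    refine ⟨convex_ball _ _, ?_⟩
    intro p hp q hq c d hc hd hcd
    rcases eq_or_lt_of_le hc with h | h
    · rw [← h, zero_smul, zero_add, show d = 1 by linarith, one_smul]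
      simp
    rcases eq_or_lt_of_le hd with h' | h'
    · rw [← h', zero_smul, add_zero, show c = 1 by linarith, one_smul]
      simp
    have hd1 : d = 1 - c := by linarith
    have hc1 : c < 1 := by linarith
    have hcomb : c • p + d • q ∈ ball (0 : EuclideanSpace ℝ (Fin n)) ρ₀ :=
      (convex_ball _ _) hp hq hc hd hcd
    have := hconv p (hball0 hp) q (hball0 hq) c ⟨h, hc1⟩
      (by rw [← hd1]; exact hball0 hcomb)
    rw [hd1]
    simpa [smul_eq_mul] using this
  have hcont : ContinuousOn u (ball (0 : EuclideanSpace ℝ (Fin n)) ρ₀) :=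
    hco.continuousOn isOpen_ball
  obtain ⟨M₁, hM₁⟩ := IsCompact.exists_bound_of_continuousOn
    (isCompact_closedBall (0 : EuclideanSpace ℝ (Fin n)) (ρ₀/2))
    (hcont.mono (closedBall_subset_ball (by linarith)))
  -- uniform lower bound for u on bounded parts of Ω
  set R : ℝ := ‖x‖ + 1 with hRdef
  have hR : 0 < R := by positivity
  set cc : ℝ := ρ₀ / (2 * R) with hccdef
  have hcc : 0 < cc := by positivity
  set τ : ℝ := cc / (1 + cc) with hτdef
  have hτ0 : 0 < τ := by positivity
  have hτ1 : τ < 1 := by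
    rw [hτdef, div_lt_one (by positivity)]
    linarith
  set m₀ : ℝ := (u 0 - (1 - τ) * M₁) / τ with hm₀def
  have hlow : ∀ y ∈ Ω, ‖y‖ ≤ R → m₀ ≤ u y := by
    intro y hyΩ hyR
    set z : EuclideanSpace ℝ (Fin n) := -(cc • y) with hzdef
    have hzn : ‖z‖ ≤ ρ₀ / 2 := by
      rw [hzdef, norm_neg, norm_smul, Real.norm_eq_abs, abs_of_pos hcc]
      calc cc * ‖y‖ ≤ cc * R := mul_le_mul_of_nonneg_left hyR hcc.le
        _ = ρ₀ / 2 := by rw [hccdef]; field_simp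
    have hz2 : z ∈ closedBall (0 : EuclideanSpace ℝ (Fin n)) (ρ₀/2) := by
      rw [mem_closedBall, dist_zero_right]; exact hzn
    have hzΩ : z ∈ Ω := by
      apply hball0
      rw [mem_ball, dist_zero_right]
      linarith
    have hτc : τ - (1 - τ) * cc = 0 := by
      rw [hτdef]
      field_simp
      ring
    have hcomb : τ • y + (1 - τ) • z = (0 : EuclideanSpace ℝ (Fin n)) := by
      have h1 : τ • y + (1 - τ) • z = (τ - (1 - τ) * cc) • y := by
        rw [hzdef]; module
      rw [h1, hτc, zero_smul]
    have h2 := hconv y hyΩ z hzΩ τ ⟨hτ0, hτ1⟩ (by rw [hcomb]; exact h0)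
    rw [hcomb] at h2
    have huz : u z ≤ M₁ := le_trans (le_abs_self _) (hM₁ z hz2)
    rw [hm₀def, div_le_iff₀ hτ0]
    have h5 : (1 - τ) * u z ≤ (1 - τ) * M₁ := mul_le_mul_of_nonneg_left huz (by linarith)
    linarith
  -- uniform gradient bounds from points of the convex hull
  have hQ : ∀ p ∈ convexHull ℝ Ω, ∃ M : ℝ, ∀ y ∈ Ω, DifferentiableAt ℝ u y →
      fderiv ℝ u y (p - y) ≤ M - u y := by
    intro p hp
    rw [convexHull_eq_union_convexHull_finite_subsets] at hp
    simp only [mem_iUnion] at hp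
    obtain ⟨F, hFΩ, hpF⟩ := hp
    have hFne : F.Nonempty := by
      rcases F.eq_empty_or_nonempty with h | h
      · exfalso
        rw [h] at hpF
        simpa using hpF
      · exact h
    refine ⟨F.sup' hFne u, fun y hyΩ hdy => ?_⟩
    have hhalf : Convex ℝ {q : EuclideanSpace ℝ (Fin n) |
        fderiv ℝ u y q ≤ F.sup' hFne u - u y + fderiv ℝ u y y} :=
      convex_halfSpace_le ⟨fun p q => map_add _ p q, fun c p => map_smul _ c p⟩ _
    have hsub : (F : Set (EuclideanSpace ℝ (Fin n))) ⊆ {q : EuclideanSpace ℝ (Fin n) |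
        fderiv ℝ u y q ≤ F.sup' hFne u - u y + fderiv ℝ u y y} := by
      intro z hzF
      have h1 : fderiv ℝ u y (z - y) ≤ u z - u y :=
        subgrad_aux hΩopen hconv hyΩ (hFΩ hzF) hdy
      have h2 : u z ≤ F.sup' hFne u := Finset.le_sup' u hzF
      rw [map_sub] at h1
      simp only [mem_setOf_eq]
      linarith
    have h3 := convexHull_min hsub hhalf hpF
    simp only [mem_setOf_eq] at h3
    rw [map_sub]
    linarith
  -- finitely many probe points around x
  have hne : Nonempty (Fin n) := ⟨⟨0, hn⟩⟩
  have hptC : ∀ (i : Fin n) (c : ℝ), |c| = η/2 →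
      x + c • EuclideanSpace.single i 1 ∈ convexHull ℝ Ω := by
    intro i c hc
    refine interior_subset (hballx ?_)
    simp only [mem_ball]
    have hd : dist (x + c • EuclideanSpace.single i (1:ℝ)) x
        = ‖c • EuclideanSpace.single i (1:ℝ)‖ := by
      rw [dist_eq_norm]
      congr 1
      abel
    rw [hd, norm_smul, Real.norm_eq_abs, EuclideanSpace.norm_single, hc]
    simp only [norm_one, mul_one]
    linarith
  have hchoice : ∀ is : Fin n × Bool, ∃ M : ℝ, ∀ y ∈ Ω, DifferentiableAt ℝ u y →
      fderiv ℝ u y (x + (if is.2 then η/2 else -(η/2)) • EuclideanSpace.single is.1 1 - y)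
        ≤ M - u y := by
    intro is
    refine hQ _ (hptC is.1 _ ?_)
    cases is.2
    · simp only [Bool.false_eq_true, if_false]
      rw [abs_neg, abs_of_pos (half_pos hη)]
    · simp only [if_true]
      rw [abs_of_pos (half_pos hη)]
  choose Mf hMf using hchoice
  set M₂ : ℝ := Finset.univ.sup' Finset.univ_nonempty Mf with hM₂def
  have hM₂ : ∀ is : Fin n × Bool, Mf is ≤ M₂ := fun is =>
    Finset.le_sup' Mf (Finset.mem_univ is)
  -- the final contradiction
  set sn : ℝ := Real.sqrt n with hsndef
  have hsn1 : 1 ≤ sn := by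
    rw [hsndef, show (1:ℝ) = Real.sqrt 1 by simp]
    exact Real.sqrt_le_sqrt (by exact_mod_cast hn)
  have hsn0 : 0 < sn := by linarith
  set δ : ℝ := min 1 (η / (4 * sn)) with hδdef
  have hδpos : 0 < δ := lt_min one_pos (by positivity)
  have hδ1 : δ ≤ 1 := min_le_left _ _
  have hδ2 : δ ≤ η / (4 * sn) := min_le_right _ _
  set D : ℝ := M₂ - m₀ with hDdef
  obtain ⟨y, ⟨hyball, hyΩ⟩, hdy, hCy⟩ := hblow x hx1 δ hδpos (4 * sn / η * D)
  set G := fderiv ℝ u y with hGdef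
  have hyR : ‖y‖ ≤ R := by
    have h1 : dist y x < δ := mem_ball.1 hyball
    calc ‖y‖ = ‖(y - x) + x‖ := by rw [sub_add_cancel]
      _ ≤ ‖y - x‖ + ‖x‖ := norm_add_le _ _
      _ ≤ δ + ‖x‖ := by
          rw [← dist_eq_norm]
          linarith
      _ ≤ R := by rw [hRdef]; linarith
  have hulow : m₀ ≤ u y := hlow y hyΩ hyR
  have hGx : |G (x - y)| ≤ ‖G‖ * δ := by
    calc |G (x - y)| = ‖G (x - y)‖ := rfl
      _ ≤ ‖G‖ * ‖x - y‖ := G.le_opNorm _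
      _ ≤ ‖G‖ * δ := by
          refine mul_le_mul_of_nonneg_left ?_ (norm_nonneg _)
          rw [← dist_eq_norm, dist_comm]
          exact (mem_ball.1 hyball).le
  have hcoord : ∀ i : Fin n, |G (EuclideanSpace.single i 1)| ≤ 2 / η * (D + ‖G‖ * δ) := by
    intro i
    have hplus := hMf (i, true) y hyΩ hdy
    have hminus := hMf (i, false) y hyΩ hdy
    simp only [if_true, Bool.false_eq_true, if_false] at hplus hminus
    have hexp : ∀ c : ℝ, fderiv ℝ u y (x + c • EuclideanSpace.single i 1 - y)
        = G (x - y) + c * G (EuclideanSpace.single i 1) := by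
      intro c
      rw [hGdef, show x + c • EuclideanSpace.single i (1:ℝ) - y
        = (x - y) + c • EuclideanSpace.single i 1 by abel]
      rw [map_add, map_smul]
      simp [smul_eq_mul]
    rw [hexp] at hplus hminus
    have hp2 : G (x - y) + (η/2) * G (EuclideanSpace.single i 1) ≤ D := by
      have := hM₂ (i, true)
      linarith
    have hm2 : G (x - y) + (-(η/2)) * G (EuclideanSpace.single i 1) ≤ D := by
      have := hM₂ (i, false)
      linarith
    have habs := abs_le.1 hGx
    have h7 : (η/2) * |G (EuclideanSpace.single i 1)| ≤ D + ‖G‖ * δ := by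
      rcases abs_cases (G (EuclideanSpace.single i 1)) with ⟨h8, _⟩ | ⟨h8, _⟩ <;>
        rw [h8] <;> linarith
    calc |G (EuclideanSpace.single i 1)| = (2/η) * ((η/2) * |G (EuclideanSpace.single i 1)|) := by
          field_simp
      _ ≤ 2/η * (D + ‖G‖ * δ) := mul_le_mul_of_nonneg_left h7 (by positivity)
  have hGbound : ‖G‖ ≤ sn * (2 / η * (D + ‖G‖ * δ)) := by
    rw [hsndef]
    exact opnorm_aux hn G hcoord
  have hG0 : 0 ≤ ‖G‖ := norm_nonneg _
  have hkey : ‖G‖ ≤ 4 * sn / η * D := by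
    have h1 : sn * (2 / η * (D + ‖G‖ * δ)) = 2*sn/η*D + 2*sn/η*(‖G‖*δ) := by
      field_simp
    have h2 : 2*sn/η*(‖G‖*δ) ≤ 2*sn/η*(‖G‖*(η/(4*sn))) := by
      refine mul_le_mul_of_nonneg_left ?_ (by positivity)
      exact mul_le_mul_of_nonneg_left hδ2 hG0
    have h3 : 2*sn/η*(‖G‖*(η/(4*sn))) = ‖G‖/2 := by
      field_simp
      ring
    have h4 : 4 * sn / η * D = 2 * (2*sn/η*D) := by ring
    rw [h4]
    linarith
  linarith
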